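/- Consider the system dη/dν = 1 − η² + ζ² − η²ζ, dζ/dν = −η(1 + ζ²), and let F(η,ζ) = ((1 + ζ²)/(η² − ζ² − 1))·exp(−2·arctan(1/ζ)) on the set G = {(η,ζ) : ζ ≠ 0 and η² − ζ² ≠ 1}. Then F is differentiable on G and (1 − η² + ζ² − η²ζ)·∂F/∂η(η,ζ) + (−η(1 + ζ²))·∂F/∂ζ(η,ζ) = 0 for all (η,ζ) ∈ G; that is, F is a general autonomous integral of the system on any domain contained in G. -/

import Mathlib

/-- `F(η,ζ) = ((1 + ζ²)/(η² − ζ² − 1))·exp(−2·arctan(1/ζ))`. -/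
noncomputable def F9 : ℝ × ℝ → ℝ :=
  fun p => ((1 + p.2 ^ 2) / (p.1 ^ 2 - p.2 ^ 2 - 1)) *
    Real.exp (-2 * Real.arctan (1 / p.2))

lemma F9_hasDeriv_phi (y : ℝ) (hy : y ≠ 0) :
    HasDerivAt (fun t : ℝ => Real.exp (-2 * Real.arctan (1 / t)))
      (Real.exp (-2 * Real.arctan (1 / y)) * (2 / (y ^ 2 + 1))) y := by
  have hinv : HasDerivAt (fun t : ℝ => 1 / t) (-(y ^ 2)⁻¹) y := by
    simpa [one_div] using hasDerivAt_inv hy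
  have h1 : HasDerivAt (fun t : ℝ => Real.arctan (1 / t))
      (1 / (1 + (1 / y) ^ 2) * -(y ^ 2)⁻¹) y := by
    simpa [Function.comp_def] using (Real.hasDerivAt_arctan (1 / y)).comp y hinv
  have h1' : HasDerivAt (fun t : ℝ => Real.arctan (1 / t)) (-(1 / (y ^ 2 + 1))) y := by
    convert h1 using 1
    have hy2 : y ^ 2 ≠ 0 := pow_ne_zero 2 hy
    field_simp
  have h2 : HasDerivAt (fun t : ℝ => -2 * Real.arctan (1 / t))
      (-2 * -(1 / (y ^ 2 + 1))) y := h1'.const_mul (-2)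
  have h3 := (Real.hasDerivAt_exp (-2 * Real.arctan (1 / y))).comp y h2
  have : HasDerivAt (fun t : ℝ => Real.exp (-2 * Real.arctan (1 / t)))
      (Real.exp (-2 * Real.arctan (1 / y)) * (-2 * -(1 / (y ^ 2 + 1)))) y := by
    simpa [Function.comp_def] using h3
  convert this using 1
  ring

/-- `F` is a general autonomous integral of the system
`dη/dν = 1 − η² + ζ² − η²ζ`, `dζ/dν = −η(1 + ζ²)` on
`G = {(η,ζ) : ζ ≠ 0 ∧ η² − ζ² ≠ 1}`. -/
theorem F9_general_autonomous_integral :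
    ∀ p : ℝ × ℝ, p.2 ≠ 0 → p.1 ^ 2 - p.2 ^ 2 ≠ 1 →
      DifferentiableAt ℝ F9 p ∧
      (1 - p.1 ^ 2 + p.2 ^ 2 - p.1 ^ 2 * p.2) * fderiv ℝ F9 p (1, 0) +
        (-(p.1 * (1 + p.2 ^ 2))) * fderiv ℝ F9 p (0, 1) = 0 := by
  rintro ⟨x, y⟩ hy hD
  simp only at hy hD
  set D : ℝ := x ^ 2 - y ^ 2 - 1 with hDdef
  have hD' : D ≠ 0 := fun h => hD (by rw [hDdef] at h; linarith)
  -- derivative of the numerator 1 + ζ²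
  have hN : HasFDerivAt (fun p : ℝ × ℝ => 1 + p.2 ^ 2)
      ((2 * y) • (ContinuousLinearMap.snd ℝ ℝ ℝ)) (x, y) := by
    have h : HasDerivAt (fun t : ℝ => 1 + t ^ 2) (2 * y) y := by
      simpa using ((hasDerivAt_pow 2 y).const_add 1)
    exact h.comp_hasFDerivAt (f := Prod.snd) (x, y) hasFDerivAt_snd
  -- derivative of the denominator
  have hDen : HasFDerivAt (fun p : ℝ × ℝ => p.1 ^ 2 - p.2 ^ 2 - 1)
      (((2 * x) • (ContinuousLinearMap.fst ℝ ℝ ℝ)) -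
        ((2 * y) • (ContinuousLinearMap.snd ℝ ℝ ℝ))) (x, y) := by
    have hx2 : HasFDerivAt (fun p : ℝ × ℝ => p.1 ^ 2)
        ((2 * x) • (ContinuousLinearMap.fst ℝ ℝ ℝ)) (x, y) := by
      have h : HasDerivAt (fun t : ℝ => t ^ 2) (2 * x) x := by
        simpa using hasDerivAt_pow 2 x
      exact h.comp_hasFDerivAt (f := Prod.fst) (x, y) hasFDerivAt_fst
    have hy2 : HasFDerivAt (fun p : ℝ × ℝ => p.2 ^ 2)
        ((2 * y) • (ContinuousLinearMap.snd ℝ ℝ ℝ)) (x, y) := by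
      have h : HasDerivAt (fun t : ℝ => t ^ 2) (2 * y) y := by
        simpa using hasDerivAt_pow 2 y
      exact h.comp_hasFDerivAt (f := Prod.snd) (x, y) hasFDerivAt_snd
    exact (hx2.sub hy2).sub_const 1
  -- derivative of the inverse of the denominator
  have hInv : HasFDerivAt (fun p : ℝ × ℝ => (p.1 ^ 2 - p.2 ^ 2 - 1)⁻¹)
      (-((D ^ 2)⁻¹ • (((2 * x) • (ContinuousLinearMap.fst ℝ ℝ ℝ)) -
        ((2 * y) • (ContinuousLinearMap.snd ℝ ℝ ℝ))))) (x, y) := by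
    have h : HasDerivAt (fun t : ℝ => t⁻¹) (-(D ^ 2)⁻¹) D := hasDerivAt_inv hD'
    simpa [Function.comp_def, neg_smul] using h.comp_hasFDerivAt (x, y) hDen
  have hA := hN.mul hInv
  have hB : HasFDerivAt (fun p : ℝ × ℝ => Real.exp (-2 * Real.arctan (1 / p.2)))
      ((Real.exp (-2 * Real.arctan (1 / y)) * (2 / (y ^ 2 + 1))) •
        (ContinuousLinearMap.snd ℝ ℝ ℝ)) (x, y) :=
    (F9_hasDeriv_phi y hy).comp_hasFDerivAt (f := Prod.snd) (x, y) hasFDerivAt_snd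
  have hF0 := hA.mul hB
  have hkey : (fun p : ℝ × ℝ => ((1 + p.2 ^ 2) * (p.1 ^ 2 - p.2 ^ 2 - 1)⁻¹) *
      Real.exp (-2 * Real.arctan (1 / p.2))) = F9 := by
    funext p; simp [F9, div_eq_mul_inv]
  rw [show ((fun p : ℝ × ℝ => 1 + p.2 ^ 2) * (fun p : ℝ × ℝ => (p.1 ^ 2 - p.2 ^ 2 - 1)⁻¹)) *
      (fun p : ℝ × ℝ => Real.exp (-2 * Real.arctan (1 / p.2))) = F9 from hkey] at hF0
  refine ⟨hF0.differentiableAt, ?_⟩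
  rw [hF0.fderiv]
  simp only [ContinuousLinearMap.add_apply, ContinuousLinearMap.smul_apply,
    ContinuousLinearMap.sub_apply, ContinuousLinearMap.coe_fst',
    ContinuousLinearMap.coe_snd', smul_eq_mul, Pi.mul_apply, ContinuousLinearMap.neg_apply]
  have h1 : (1 : ℝ) + y ^ 2 ≠ 0 := by positivity
  have h1' : y ^ 2 + 1 ≠ 0 := by positivity
  have he : Real.exp (-2 * Real.arctan (1 / y)) ≠ 0 := Real.exp_ne_zero _
  rw [hDdef] at hD' ⊢
  field_simp
  ring
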